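/- Let 1 ≤ p < ∞, 0 < T < R, N ≥ 1 an integer, and suppose f : ℝ^N → ℝ^N is C^1. Then the family of maps W^{1,p}([−R,0],ℝ^N) ∋ φ ↦ B_{φ,r} ∈ W^{1,p}([−R,T],ℝ^N), indexed by r ∈ [T,R], is pointwise equicontinuous: for every φ_0 ∈ W^{1,p}([−R,0],ℝ^N) and ε > 0 there is δ > 0 such that ‖φ − φ_0‖_{W^{1,p}[−R,0]} < δ implies ‖B_{φ,r} − B_{φ_0,r}‖_{W^{1,p}[−R,T]} < ε for every r ∈ [T,R]. -/

import Mathlib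

open MeasureTheory Set ENNReal

noncomputable section

/-- `ℝ^N` with a fixed norm (the Euclidean one). -/
abbrev Vec (N : ℕ) : Type := EuclideanSpace ℝ (Fin N)

/-- `x ∈ W^{1,p}([a,b],ℝ^N)`: `x` is absolutely continuous on `[a,b]` (equivalently, it is the
integral of its almost-everywhere derivative `x'`), and `x' ∈ L^p([a,b],ℝ^N)`. -/
def HasW1pOn {N : ℕ} (x x' : ℝ → Vec N) (p a b : ℝ) : Prop :=
  (∀ t ∈ Set.Icc a b, x t = x a + ∫ s in a..t, x' s) ∧
    IntervalIntegrable x' volume a b ∧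
    MemLp x' (ENNReal.ofReal p) (volume.restrict (Set.Icc a b))

/-- The `W^{1,p}[a,b]`-norm, computed from the value `v = x a` at the left endpoint and the
almost-everywhere derivative `d = x'`:  `(|x(a)|^p + ∫_a^b |x'|^p)^(1/p)`. -/
def wNorm {N : ℕ} (p a b : ℝ) (v : Vec N) (d : ℝ → Vec N) : ℝ :=
  (‖v‖ ^ p + ∫ t in a..b, ‖d t‖ ^ p) ^ (1 / p)

/-- The supremum norm `‖x‖_{C[a,b]}`. -/
def cNorm {N : ℕ} (a b : ℝ) (x : ℝ → Vec N) : ℝ :=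
  sSup ((fun t => ‖x t‖) '' Set.Icc a b)

/-- The almost-everywhere derivative of `f ∘ φ`, namely `θ ↦ Df(φ(θ)) φ'(θ)`. -/
def gder {N : ℕ} (f : Vec N → Vec N) (φ φ' : ℝ → Vec N) : ℝ → Vec N :=
  fun θ => fderiv ℝ f (φ θ) (φ' θ)

/-- The solution `x(·;φ,r)` of `ẋ(t) = f(x(t−r))` on `[−R,T]`, for delay `r ∈ [T,R]`:
`x(t;φ,r) = φ(t)` for `t ≤ 0` and `x(t;φ,r) = φ(0) + ∫_0^t f(φ(s−r)) ds` for `t ≥ 0`. -/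
def solX {N : ℕ} (f : Vec N → Vec N) (φ : ℝ → Vec N) (r : ℝ) : ℝ → Vec N :=
  fun t => if t ≤ 0 then φ t else φ 0 + ∫ s in (0:ℝ)..t, f (φ (s - r))

/-- The almost-everywhere derivative of `x(·;φ,r)`. -/
def solX' {N : ℕ} (f : Vec N → Vec N) (φ φ' : ℝ → Vec N) (r : ℝ) : ℝ → Vec N :=
  fun t => if t ≤ 0 then φ' t else f (φ (t - r))

/-- `B_{φ,r}(t) = 0` for `t ∈ [−R,0]`, `B_{φ,r}(t) = −∫_0^t (f∘φ)'(s−r) ds` for `t ∈ [0,T]`. -/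
def Bfun {N : ℕ} (f : Vec N → Vec N) (φ φ' : ℝ → Vec N) (r : ℝ) : ℝ → Vec N :=
  fun t => if t ≤ 0 then 0 else -∫ s in (0:ℝ)..t, gder f φ φ' (s - r)

/-- The almost-everywhere derivative of `B_{φ,r}`. -/
def Bfun' {N : ℕ} (f : Vec N → Vec N) (φ φ' : ℝ → Vec N) (r : ℝ) : ℝ → Vec N :=
  fun t => if t ≤ 0 then 0 else -gder f φ φ' (t - r)

/-- if `f` is `C^1`, the family of maps `φ ↦ B_{φ,r}`, indexed by `r ∈ [T,R]`, from
`W^{1,p}([−R,0],ℝ^N)` to `W^{1,p}([−R,T],ℝ^N)` is pointwise equicontinuous: for every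
`φ0 ∈ W^{1,p}([−R,0])` and `ε > 0` there is `δ > 0` such that
`‖φ − φ0‖_{W^{1,p}[−R,0]} < δ` implies `‖B_{φ,r} − B_{φ0,r}‖_{W^{1,p}[−R,T]} < ε` for all
`r ∈ [T,R]`. -/

private lemma aux_two_rpow {p : ℝ} (hp : 1 ≤ p) {a b : ℝ} (ha : 0 ≤ a) (hb : 0 ≤ b) :
    (a + b) ^ p ≤ 2 ^ p * (a ^ p + b ^ p) := by
  have hp0 : (0:ℝ) ≤ p := by linarith
  have h1 : a + b ≤ 2 * max a b := by
    rcases le_total a b with h | h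
    · rw [max_eq_right h]; linarith
    · rw [max_eq_left h]; linarith
  calc (a + b) ^ p ≤ (2 * max a b) ^ p :=
        Real.rpow_le_rpow (by positivity) h1 hp0
    _ = 2 ^ p * (max a b) ^ p := Real.mul_rpow (by norm_num) (le_max_of_le_left ha)
    _ ≤ 2 ^ p * (a ^ p + b ^ p) := by
        have hmax : (max a b) ^ p ≤ a ^ p + b ^ p := by
          rcases le_total a b with h | h
          · rw [max_eq_right h]
            have := Real.rpow_nonneg ha p
            linarith
          · rw [max_eq_left h]
            have := Real.rpow_nonneg hb p
            linarith
        have h2 : (0:ℝ) ≤ (2:ℝ) ^ p := Real.rpow_nonneg (by norm_num) p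
        exact mul_le_mul_of_nonneg_left hmax h2

private lemma aux_le_eta {p η x : ℝ} (hp : 1 ≤ p) (hη : 0 < η) (hx : 0 ≤ x) :
    x ≤ η + η ^ (1 - p) * x ^ p := by
  rcases le_or_gt x η with h | h
  · have h0 : 0 ≤ η ^ (1 - p) * x ^ p :=
      mul_nonneg (Real.rpow_nonneg hη.le _) (Real.rpow_nonneg hx _)
    linarith
  · have hx0 : 0 < x := hη.trans h
    have h1 : x ^ (1 - p) ≤ η ^ (1 - p) :=
      Real.rpow_le_rpow_of_nonpos hη h.le (by linarith)
    have h2 : x ^ (1 - p) * x ^ p = x := by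
      rw [← Real.rpow_add hx0]; norm_num
    have h3 : (0:ℝ) < x ^ p := Real.rpow_pos_of_pos hx0 p
    nlinarith


set_option maxHeartbeats 1000000 in
theorem stmt4 (N : ℕ) (hN : 1 ≤ N) (p : ℝ) (hp : 1 ≤ p) (R T : ℝ) (hT : 0 < T) (hTR : T < R)
    (f : Vec N → Vec N) (hf : ContDiff ℝ 1 f) (φ0 φ0' : ℝ → Vec N)
    (hφ0 : HasW1pOn φ0 φ0' p (-R) 0) :
    ∀ ε > 0, ∃ δ > 0, ∀ φ φ' : ℝ → Vec N, HasW1pOn φ φ' p (-R) 0 →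
      wNorm p (-R) 0 (φ (-R) - φ0 (-R)) (fun θ => φ' θ - φ0' θ) < δ →
      ∀ r ∈ Set.Icc T R,
        wNorm p (-R) T (Bfun f φ φ' r (-R) - Bfun f φ0 φ0' r (-R))
            (fun t => Bfun' f φ φ' r t - Bfun' f φ0 φ0' r t) < ε := by
  intro ε hε
  have hp0 : (0:ℝ) < p := lt_of_lt_of_le one_pos hp
  have hpne : p ≠ 0 := ne_of_gt hp0
  have hR0 : (0:ℝ) < R := hT.trans hTR
  have hR : (-R : ℝ) ≤ 0 := by linarith
  obtain ⟨hφ0rep, hφ0int, hφ0lp⟩ := hφ0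
  -- the continuous representative of φ0 on [-R,0]
  set φc0 : ℝ → Vec N := fun t => φ0 (-R) + ∫ s in (-R)..t, φ0' s with hφc0def
  have hIccuIcc : Set.Icc (-R) 0 = Set.uIcc (-R) 0 := (Set.uIcc_of_le hR).symm
  have hφc0cont : ContinuousOn φc0 (Set.Icc (-R) 0) := by
    rw [hIccuIcc]
    exact continuousOn_const.add
      (intervalIntegral.continuousOn_primitive_interval' hφ0int Set.left_mem_uIcc)
  set K0 : Set (Vec N) := φc0 '' Set.Icc (-R) 0 with hK0def
  have hK0 : IsCompact K0 := isCompact_Icc.image_of_continuousOn hφc0cont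
  set K : Set (Vec N) := Metric.cthickening 1 K0 with hKdef
  have hKcomp : IsCompact K :=
    Metric.isCompact_of_isClosed_isBounded Metric.isClosed_cthickening
      (hK0.isBounded.cthickening)
  have hK0K : K0 ⊆ K := Metric.self_subset_cthickening K0
  -- a bound for the derivative of f on K
  obtain ⟨M0, hM0⟩ :=
    hKcomp.exists_bound_of_continuousOn (hf.continuous_fderiv one_ne_zero).continuousOn
  set M : ℝ := max M0 1 with hMdef
  have hM1 : (1:ℝ) ≤ M := le_max_right _ _
  have hMpos : (0:ℝ) < M := lt_of_lt_of_le one_pos hM1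
  have hMb : ∀ x ∈ K, ‖fderiv ℝ f x‖ ≤ M := fun x hx => (hM0 x hx).trans (le_max_left _ _)
  -- integrability of ‖φ0'‖^p
  have hpofs : (ENNReal.ofReal p) ≠ 0 := (ENNReal.ofReal_pos.mpr hp0).ne'
  have hd0int : Integrable (fun θ => ‖φ0' θ‖ ^ p) (volume.restrict (Set.Icc (-R) 0)) := by
    have h := hφ0lp.integrable_norm_rpow hpofs ENNReal.ofReal_ne_top
    rwa [ENNReal.toReal_ofReal hp0.le] at h
  set I0 : ℝ := ∫ θ in (-R)..0, ‖φ0' θ‖ ^ p with hI0def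
  have hI0nonneg : 0 ≤ I0 :=
    intervalIntegral.integral_nonneg hR fun u _ => Real.rpow_nonneg (norm_nonneg _) p
  have h2ppos : (0:ℝ) < 2 ^ p := Real.rpow_pos_of_pos two_pos p
  have hεppos : (0:ℝ) < ε ^ p := Real.rpow_pos_of_pos hε p
  -- choice of ω
  have hωbase : (0:ℝ) < ε ^ p / (2 * 2 ^ p * (I0 + 1)) :=
    div_pos hεppos (by positivity)
  set ω : ℝ := (ε ^ p / (2 * 2 ^ p * (I0 + 1))) ^ (1 / p) with hωdef
  have hωpos : 0 < ω := Real.rpow_pos_of_pos hωbase _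
  have hωp : ω ^ p = ε ^ p / (2 * 2 ^ p * (I0 + 1)) := by
    rw [hωdef, one_div, Real.rpow_inv_rpow hωbase.le hpne]
  -- uniform continuity of the derivative of f on K
  have hunif := hKcomp.uniformContinuousOn_of_continuous
    (hf.continuous_fderiv one_ne_zero).continuousOn
  rw [Metric.uniformContinuousOn_iff] at hunif
  obtain ⟨s, hs, hsb⟩ := hunif ω hωpos
  set σ : ℝ := min 1 (s / 2) with hσdef
  have hσpos : 0 < σ := lt_min one_pos (by linarith)
  have hσ1 : σ ≤ 1 := min_le_left _ _
  have hσs : σ < s := lt_of_le_of_lt (min_le_right _ _) (by linarith)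
  set η : ℝ := σ / (2 * R) with hηdef
  have hηpos : 0 < η := by positivity
  have hηR : η * R = σ / 2 := by
    rw [hηdef]; field_simp
  have hη1p : (0:ℝ) < η ^ (1 - p) := Real.rpow_pos_of_pos hηpos _
  -- choice of δ
  have hδ1base : (0:ℝ) < ε ^ p / (2 * 2 ^ p * M ^ p) :=
    div_pos hεppos (by positivity)
  set δ1 : ℝ := (ε ^ p / (2 * 2 ^ p * M ^ p)) ^ (1 / p) with hδ1def
  have hδ1pos : 0 < δ1 := Real.rpow_pos_of_pos hδ1base _
  have hδ1p : δ1 ^ p = ε ^ p / (2 * 2 ^ p * M ^ p) := by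
    rw [hδ1def, one_div, Real.rpow_inv_rpow hδ1base.le hpne]
  set δ2 : ℝ := σ / 4 with hδ2def
  have hδ2pos : 0 < δ2 := by positivity
  have hδ3base : (0:ℝ) < σ / (4 * η ^ (1 - p)) := by positivity
  set δ3 : ℝ := (σ / (4 * η ^ (1 - p))) ^ (1 / p) with hδ3def
  have hδ3pos : 0 < δ3 := Real.rpow_pos_of_pos hδ3base _
  have hδ3p : δ3 ^ p = σ / (4 * η ^ (1 - p)) := by
    rw [hδ3def, one_div, Real.rpow_inv_rpow hδ3base.le hpne]
  refine ⟨min δ1 (min δ2 δ3), lt_min hδ1pos (lt_min hδ2pos hδ3pos), ?_⟩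
  set δ : ℝ := min δ1 (min δ2 δ3) with hδdef
  have hδpos : 0 < δ := lt_min hδ1pos (lt_min hδ2pos hδ3pos)
  have hδle1 : δ ≤ δ1 := min_le_left _ _
  have hδle2 : δ ≤ δ2 := le_trans (min_le_right _ _) (min_le_left _ _)
  have hδle3 : δ ≤ δ3 := le_trans (min_le_right _ _) (min_le_right _ _)
  intro φ φ' hφ hwn r hr
  obtain ⟨hφrep, hφint, hφlp⟩ := hφ
  set u : ℝ → Vec N := fun θ => φ' θ - φ0' θ with hudef
  have huint : IntervalIntegrable u volume (-R) 0 := hφint.sub hφ0int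
  have hulp : MemLp u (ENNReal.ofReal p) (volume.restrict (Set.Icc (-R) 0)) :=
    hφlp.sub hφ0lp
  have hupint : Integrable (fun θ => ‖u θ‖ ^ p) (volume.restrict (Set.Icc (-R) 0)) := by
    have h := hulp.integrable_norm_rpow hpofs ENNReal.ofReal_ne_top
    rwa [ENNReal.toReal_ofReal hp0.le] at h
  have hup_ii : IntervalIntegrable (fun θ => ‖u θ‖ ^ p) volume (-R) 0 := by
    rw [intervalIntegrable_iff_integrableOn_Ioc_of_le hR]
    exact hupint.mono_measure (Measure.restrict_mono Set.Ioc_subset_Icc_self le_rfl)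
  set Δ : ℝ := ∫ θ in (-R)..0, ‖u θ‖ ^ p with hΔdef
  have hΔnonneg : 0 ≤ Δ :=
    intervalIntegral.integral_nonneg hR fun x _ => Real.rpow_nonneg (norm_nonneg _) p
  set v : Vec N := φ (-R) - φ0 (-R) with hvdef
  -- consequences of the smallness hypothesis
  have hX : ‖v‖ ^ p + Δ < δ ^ p := by
    have h1 : 0 ≤ ‖v‖ ^ p + Δ :=
      add_nonneg (Real.rpow_nonneg (norm_nonneg _) _) hΔnonneg
    have h2 : (‖v‖ ^ p + Δ) ^ (1 / p) < δ := hwn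
    have h3 := Real.rpow_lt_rpow (Real.rpow_nonneg h1 _) h2 hp0
    rwa [one_div, Real.rpow_inv_rpow h1 hpne] at h3
  have hΔlt : Δ < δ ^ p :=
    lt_of_le_of_lt (le_add_of_nonneg_left (Real.rpow_nonneg (norm_nonneg _) _)) hX
  have hv : ‖v‖ < δ := by
    have h1 : ‖v‖ ^ p < δ ^ p := lt_of_le_of_lt (le_add_of_nonneg_right hΔnonneg) hX
    by_contra hc
    push_neg at hc
    exact absurd (Real.rpow_le_rpow hδpos.le hc hp0.le) (not_lt.mpr · h1)
  -- bound on the integral of ‖u‖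
  have hintu : (∫ θ in (-R)..0, ‖u θ‖) ≤ η * R + η ^ (1 - p) * Δ := by
    have hrhs : IntervalIntegrable (fun θ => η + η ^ (1 - p) * ‖u θ‖ ^ p) volume (-R) 0 :=
      intervalIntegrable_const.add (hup_ii.const_mul _)
    have hmono := intervalIntegral.integral_mono_on hR huint.norm hrhs
      (fun x _ => aux_le_eta hp hηpos (norm_nonneg (u x)))
    have hcomp : (∫ θ in (-R)..0, (η + η ^ (1 - p) * ‖u θ‖ ^ p))
        = η * R + η ^ (1 - p) * Δ := by
      rw [intervalIntegral.integral_add intervalIntegrable_const (hup_ii.const_mul _),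
        intervalIntegral.integral_const, intervalIntegral.integral_const_mul,
        ← hΔdef, smul_eq_mul]
      ring
    rw [hcomp] at hmono
    exact hmono
  -- sup-norm bound
  have hsup : ∀ θ ∈ Set.Icc (-R) (0:ℝ), ‖φ θ - φ0 θ‖ < σ := by
    intro θ hθ
    have hsub : Set.uIcc (-R) θ ⊆ Set.uIcc (-R) 0 := by
      rw [Set.uIcc_of_le hθ.1, ← hIccuIcc]
      exact Set.Icc_subset_Icc le_rfl hθ.2
    have hrepθ : φ θ - φ0 θ = v + ∫ s in (-R)..θ, u s := by
      rw [hφrep θ hθ, hφ0rep θ hθ,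
        intervalIntegral.integral_sub (hφint.mono_set hsub) (hφ0int.mono_set hsub), hvdef]
      abel
    have h1 : ‖∫ s in (-R)..θ, u s‖ ≤ ∫ s in (-R)..θ, ‖u s‖ :=
      intervalIntegral.norm_integral_le_integral_norm hθ.1
    have h2 : (∫ s in (-R)..θ, ‖u s‖) ≤ ∫ s in (-R)..0, ‖u s‖ :=
      intervalIntegral.integral_mono_interval le_rfl hθ.1 hθ.2
        (Filter.Eventually.of_forall fun x => norm_nonneg _) huint.norm
    have h3 : η ^ (1 - p) * Δ ≤ σ / 4 := by
      have hδp3 : δ ^ p ≤ δ3 ^ p := Real.rpow_le_rpow hδpos.le hδle3 hp0.le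
      have : η ^ (1 - p) * Δ ≤ η ^ (1 - p) * (σ / (4 * η ^ (1 - p))) := by
        apply mul_le_mul_of_nonneg_left _ hη1p.le
        exact le_trans hΔlt.le (hδp3.trans_eq hδ3p)
      calc η ^ (1 - p) * Δ ≤ η ^ (1 - p) * (σ / (4 * η ^ (1 - p))) := this
        _ = σ / 4 := by
            field_simp
    have h4 : ‖φ θ - φ0 θ‖ ≤ ‖v‖ + ∫ s in (-R)..θ, ‖u s‖ := by
      rw [hrepθ]
      exact (norm_add_le _ _).trans (by gcongr)
    calc ‖φ θ - φ0 θ‖ ≤ ‖v‖ + ∫ s in (-R)..θ, ‖u s‖ := h4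
      _ ≤ ‖v‖ + ∫ s in (-R)..0, ‖u s‖ := by linarith
      _ ≤ ‖v‖ + (η * R + η ^ (1 - p) * Δ) := by linarith
      _ < σ / 4 + (σ / 2 + σ / 4) := by
          rw [hηR] at *
          have : ‖v‖ < σ / 4 := lt_of_lt_of_le hv hδle2
          linarith
      _ = σ := by ring
  -- membership in K
  have hφ0mem : ∀ θ ∈ Set.Icc (-R) (0:ℝ), φ0 θ ∈ K0 := by
    intro θ hθ
    exact ⟨θ, hθ, (hφ0rep θ hθ).symm⟩
  have hφmem : ∀ θ ∈ Set.Icc (-R) (0:ℝ), φ θ ∈ K := by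
    intro θ hθ
    refine Metric.mem_cthickening_of_dist_le (φ θ) (φ0 θ) 1 K0 (hφ0mem θ hθ) ?_
    rw [dist_eq_norm]
    exact le_trans (hsup θ hθ).le hσ1
  -- pointwise bound for g
  set g : ℝ → Vec N := fun θ => gder f φ φ' θ - gder f φ0 φ0' θ with hgdef
  have hgbound : ∀ θ ∈ Set.Icc (-R) (0:ℝ), ‖g θ‖ ≤ M * ‖u θ‖ + ω * ‖φ0' θ‖ := by
    intro θ hθ
    have h1 : g θ = (fderiv ℝ f (φ θ)) (u θ)
        + ((fderiv ℝ f (φ θ)) - (fderiv ℝ f (φ0 θ))) (φ0' θ) := by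
      simp only [hgdef, hudef, gder, ContinuousLinearMap.sub_apply, map_sub]
      abel
    rw [h1]
    refine (norm_add_le _ _).trans (add_le_add ?_ ?_)
    · exact (ContinuousLinearMap.le_opNorm _ _).trans
        (mul_le_mul_of_nonneg_right (hMb _ (hφmem θ hθ)) (norm_nonneg _))
    · refine (ContinuousLinearMap.le_opNorm _ _).trans
        (mul_le_mul_of_nonneg_right ?_ (norm_nonneg _))
      have hd := hsb (φ θ) (hφmem θ hθ) (φ0 θ) (hK0K (hφ0mem θ hθ))
        (by rw [dist_eq_norm]; exact lt_of_lt_of_le (hsup θ hθ) hσs.le)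
      rw [dist_eq_norm] at hd
      exact hd.le
  have hgpbound : ∀ θ ∈ Set.Icc (-R) (0:ℝ),
      ‖g θ‖ ^ p ≤ 2 ^ p * (M ^ p * ‖u θ‖ ^ p + ω ^ p * ‖φ0' θ‖ ^ p) := by
    intro θ hθ
    calc ‖g θ‖ ^ p ≤ (M * ‖u θ‖ + ω * ‖φ0' θ‖) ^ p :=
          Real.rpow_le_rpow (norm_nonneg _) (hgbound θ hθ) hp0.le
      _ ≤ 2 ^ p * ((M * ‖u θ‖) ^ p + (ω * ‖φ0' θ‖) ^ p) :=
          aux_two_rpow hp (by positivity) (by positivity)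
      _ = 2 ^ p * (M ^ p * ‖u θ‖ ^ p + ω ^ p * ‖φ0' θ‖ ^ p) := by
          rw [Real.mul_rpow hMpos.le (norm_nonneg _), Real.mul_rpow hωpos.le (norm_nonneg _)]
  -- measurability of g
  have hφmeas : AEStronglyMeasurable φ (volume.restrict (Set.Icc (-R) (0:ℝ))) := by
    have hc : ContinuousOn (fun t => φ (-R) + ∫ s in (-R)..t, φ' s) (Set.Icc (-R) 0) := by
      rw [hIccuIcc]
      exact continuousOn_const.add
        (intervalIntegral.continuousOn_primitive_interval' hφint Set.left_mem_uIcc)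
    refine (hc.aestronglyMeasurable measurableSet_Icc).congr ?_
    filter_upwards [ae_restrict_mem measurableSet_Icc] with θ hθ
    exact (hφrep θ hθ).symm
  have hφ0meas : AEStronglyMeasurable φ0 (volume.restrict (Set.Icc (-R) (0:ℝ))) := by
    refine (hφc0cont.aestronglyMeasurable measurableSet_Icc).congr ?_
    filter_upwards [ae_restrict_mem measurableSet_Icc] with θ hθ
    exact (hφ0rep θ hθ).symm
  have hgmeas : AEStronglyMeasurable g (volume.restrict (Set.Icc (-R) (0:ℝ))) := by
    have hA : AEStronglyMeasurable (fun θ => fderiv ℝ f (φ θ))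
        (volume.restrict (Set.Icc (-R) (0:ℝ))) :=
      (hf.continuous_fderiv one_ne_zero).comp_aestronglyMeasurable hφmeas
    have hA0 : AEStronglyMeasurable (fun θ => fderiv ℝ f (φ0 θ))
        (volume.restrict (Set.Icc (-R) (0:ℝ))) :=
      (hf.continuous_fderiv one_ne_zero).comp_aestronglyMeasurable hφ0meas
    have h1 : AEStronglyMeasurable (fun θ => gder f φ φ' θ)
        (volume.restrict (Set.Icc (-R) (0:ℝ))) :=
      by
      have h := (ContinuousLinearMap.apply ℝ (Vec N)).aestronglyMeasurable_comp₂ hφlp.1 hA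
      simpa only [ContinuousLinearMap.apply_apply, gder] using h
    have h2 : AEStronglyMeasurable (fun θ => gder f φ0 φ0' θ)
        (volume.restrict (Set.Icc (-R) (0:ℝ))) :=
      by
      have h := (ContinuousLinearMap.apply ℝ (Vec N)).aestronglyMeasurable_comp₂ hφ0lp.1 hA0
      simpa only [ContinuousLinearMap.apply_apply, gder] using h
    exact h1.sub h2
  -- integrability of ‖g‖^p on [-R,0]
  have hGmaj : Integrable (fun θ => 2 ^ p * (M ^ p * ‖u θ‖ ^ p + ω ^ p * ‖φ0' θ‖ ^ p))
      (volume.restrict (Set.Icc (-R) (0:ℝ))) :=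
    ((hupint.const_mul _).add (hd0int.const_mul _)).const_mul _
  have hgpint : Integrable (fun θ => ‖g θ‖ ^ p) (volume.restrict (Set.Icc (-R) (0:ℝ))) := by
    refine hGmaj.mono' ((Real.continuous_rpow_const hp0.le).comp_aestronglyMeasurable
      hgmeas.norm) ?_
    filter_upwards [ae_restrict_mem measurableSet_Icc] with θ hθ
    rw [Real.norm_eq_abs, abs_of_nonneg (Real.rpow_nonneg (norm_nonneg _) _)]
    exact hgpbound θ hθ
  have hgp_ii : IntervalIntegrable (fun θ => ‖g θ‖ ^ p) volume (-R) 0 := by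
    rw [intervalIntegrable_iff_integrableOn_Ioc_of_le hR]
    exact hgpint.mono_measure (Measure.restrict_mono Set.Ioc_subset_Icc_self le_rfl)
  have hG_ii : IntervalIntegrable
      (fun θ => 2 ^ p * (M ^ p * ‖u θ‖ ^ p + ω ^ p * ‖φ0' θ‖ ^ p)) volume (-R) 0 := by
    rw [intervalIntegrable_iff_integrableOn_Ioc_of_le hR]
    exact hGmaj.mono_measure (Measure.restrict_mono Set.Ioc_subset_Icc_self le_rfl)
  -- the key integral bound on [-R,0]
  have hd0_ii : IntervalIntegrable (fun θ => ‖φ0' θ‖ ^ p) volume (-R) 0 := by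
    rw [intervalIntegrable_iff_integrableOn_Ioc_of_le hR]
    exact hd0int.mono_measure (Measure.restrict_mono Set.Ioc_subset_Icc_self le_rfl)
  have hJ : (∫ θ in (-R)..0, ‖g θ‖ ^ p) ≤ 2 ^ p * (M ^ p * Δ + ω ^ p * I0) := by
    have hmono := intervalIntegral.integral_mono_on hR hgp_ii hG_ii hgpbound
    have hcomp : (∫ θ in (-R)..0, 2 ^ p * (M ^ p * ‖u θ‖ ^ p + ω ^ p * ‖φ0' θ‖ ^ p))
        = 2 ^ p * (M ^ p * Δ + ω ^ p * I0) := by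
      rw [intervalIntegral.integral_const_mul,
        intervalIntegral.integral_add (hup_ii.const_mul _) (hd0_ii.const_mul _),
        intervalIntegral.integral_const_mul, intervalIntegral.integral_const_mul]
    rw [hcomp] at hmono
    exact hmono
  have hJfin : (∫ θ in (-R)..0, ‖g θ‖ ^ p) < ε ^ p := by
    have hA : M ^ p * Δ < ε ^ p / (2 * 2 ^ p) := by
      have h1 : δ ^ p ≤ δ1 ^ p := Real.rpow_le_rpow hδpos.le hδle1 hp0.le
      have hMp : (0:ℝ) < M ^ p := Real.rpow_pos_of_pos hMpos p
      have h2 : M ^ p * Δ < M ^ p * (ε ^ p / (2 * 2 ^ p * M ^ p)) := by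
        apply mul_lt_mul_of_pos_left _ hMp
        exact lt_of_lt_of_le hΔlt (h1.trans_eq hδ1p)
      calc M ^ p * Δ < M ^ p * (ε ^ p / (2 * 2 ^ p * M ^ p)) := h2
        _ = ε ^ p / (2 * 2 ^ p) := by
            field_simp
    have hB : ω ^ p * I0 ≤ ε ^ p / (2 * 2 ^ p) := by
      have hI1 : I0 + 1 ≠ 0 := by linarith
      have h1 : ω ^ p * I0 ≤ ω ^ p * (I0 + 1) :=
        mul_le_mul_of_nonneg_left (by linarith) (Real.rpow_nonneg hωpos.le p)
      have h2 : ω ^ p * (I0 + 1) = ε ^ p / (2 * 2 ^ p) := by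
        rw [hωp]
        field_simp
      linarith
    calc (∫ θ in (-R)..0, ‖g θ‖ ^ p) ≤ 2 ^ p * (M ^ p * Δ + ω ^ p * I0) := hJ
      _ < 2 ^ p * (ε ^ p / (2 * 2 ^ p) + ε ^ p / (2 * 2 ^ p)) := by
          apply mul_lt_mul_of_pos_left _ h2ppos
          linarith
      _ = ε ^ p := by field_simp; ring
  -- now the left-hand side
  set F : ℝ → ℝ := fun t => ‖Bfun' f φ φ' r t - Bfun' f φ0 φ0' r t‖ ^ p with hFdef
  have hrT : T ≤ r := hr.1
  have hrR : r ≤ R := hr.2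
  have hF0 : ∀ t ≤ (0:ℝ), F t = 0 := by
    intro t ht
    simp only [hFdef, Bfun', if_pos ht, sub_zero, norm_zero]
    exact Real.zero_rpow hpne
  have hFpos : ∀ t, 0 < t → F t = ‖g (t - r)‖ ^ p := by
    intro t ht
    simp only [hFdef, Bfun', if_neg (not_le.mpr ht), hgdef]
    rw [← norm_neg]
    congr 1
    abel
  -- integrability of F on [-R,0] : F vanishes there
  have hF1 : IntervalIntegrable F volume (-R) 0 := by
    rw [intervalIntegrable_iff_integrableOn_Ioc_of_le hR]
    refine (integrable_zero _ _ _).congr ?_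
    filter_upwards [ae_restrict_mem measurableSet_Ioc] with t ht
    exact (hF0 t ht.2).symm
  -- integrability of h(· - r) on [0,T]
  have hsubint : IntervalIntegrable (fun θ => ‖g θ‖ ^ p) volume (-r) (T - r) := by
    refine hgp_ii.mono_set ?_
    rw [Set.uIcc_of_le (by linarith : -r ≤ T - r), ← hIccuIcc]
    exact Set.Icc_subset_Icc (by linarith) (by linarith)
  have hcomp_ii : IntervalIntegrable (fun t => ‖g (t - r)‖ ^ p) volume 0 T := by
    have h := hsubint.comp_sub_right r
    have e1 : -r + r = (0:ℝ) := by ring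
    have e2 : T - r + r = T := by ring
    rwa [e1, e2] at h
  have hF2 : IntervalIntegrable F volume 0 T := by
    rw [intervalIntegrable_iff_integrableOn_Ioc_of_le hT.le]
    have h := (intervalIntegrable_iff_integrableOn_Ioc_of_le hT.le).mp hcomp_ii
    refine h.congr ?_
    filter_upwards [ae_restrict_mem measurableSet_Ioc] with t ht
    exact (hFpos t ht.1).symm
  -- value of the integral of F
  have hIF : (∫ t in (-R)..T, F t) < ε ^ p := by
    have hsplit : (∫ t in (-R)..T, F t)
        = (∫ t in (-R)..0, F t) + ∫ t in (0:ℝ)..T, F t :=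
      (intervalIntegral.integral_add_adjacent_intervals hF1 hF2).symm
    have hz : (∫ t in (-R)..0, F t) = 0 := by
      rw [intervalIntegral.integral_congr_ae
        (g := fun _ => (0:ℝ)) ?_, intervalIntegral.integral_zero]
      filter_upwards with t ht
      rw [Set.uIoc_of_le hR] at ht
      exact hF0 t ht.2
    have he : (∫ t in (0:ℝ)..T, F t) = ∫ t in (0:ℝ)..T, ‖g (t - r)‖ ^ p := by
      refine intervalIntegral.integral_congr_ae ?_
      filter_upwards with t ht
      rw [Set.uIoc_of_le hT.le] at ht
      exact hFpos t ht.1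
    have hshift : (∫ t in (0:ℝ)..T, ‖g (t - r)‖ ^ p)
        = ∫ θ in (0 - r)..(T - r), ‖g θ‖ ^ p :=
      intervalIntegral.integral_comp_sub_right (fun θ => ‖g θ‖ ^ p) r
    have hmono : (∫ θ in (0 - r)..(T - r), ‖g θ‖ ^ p) ≤ ∫ θ in (-R)..0, ‖g θ‖ ^ p := by
      refine intervalIntegral.integral_mono_interval (by linarith) (by linarith)
        (by linarith) ?_ hgp_ii
      exact Filter.Eventually.of_forall fun x => Real.rpow_nonneg (norm_nonneg _) _
    rw [hsplit, hz, zero_add, he, hshift]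
    exact lt_of_le_of_lt hmono hJfin
  have hIFnn : 0 ≤ ∫ t in (-R)..T, F t :=
    intervalIntegral.integral_nonneg (by linarith)
      fun t _ => Real.rpow_nonneg (norm_nonneg _) _
  -- conclude
  have hB0 : Bfun f φ φ' r (-R) - Bfun f φ0 φ0' r (-R) = 0 := by
    simp [Bfun, hR]
  rw [wNorm, hB0]
  calc (‖(0:Vec N)‖ ^ p + ∫ t in (-R)..T, F t) ^ (1 / p)
      = (∫ t in (-R)..T, F t) ^ (1 / p) := by
        rw [norm_zero, Real.zero_rpow hpne, zero_add]
    _ < (ε ^ p) ^ (1 / p) := Real.rpow_lt_rpow hIFnn hIF (by positivity)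
    _ = ε := by rw [one_div, Real.rpow_rpow_inv hε.le hpne]
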